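/- Under the Kähler cvc(1) package described in the context, if dim V ≥ 6, then λ(v) = 4 for every unit vector v ∈ V, where λ(v) = R(v,Av,Av,v)/‖Av‖². -/

import Mathlib

open scoped RealInnerProductSpace

set_option linter.unusedSectionVars false
set_option maxHeartbeats 4000000

section KahlerCVC

variable {V : Type*} [NormedAddCommGroup V] [InnerProductSpace ℝ V] [FiniteDimensional ℝ V]
variable (J : V →ₗ[ℝ] V) (R : V →ₗ[ℝ] V →ₗ[ℝ] V →ₗ[ℝ] V →ₗ[ℝ] ℝ) (A : V →ₗ[ℝ] V)

lemma aux_jskew (J : V →ₗ[ℝ] V) (hJiso : ∀ x y : V, ⟪J x, J y⟫ = ⟪x, y⟫)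
    (hJ2 : ∀ x : V, J (J x) = -x) (x y : V) : ⟪J x, y⟫ = -⟪x, J y⟫ := by
  have h := hJiso x (J y)
  rw [hJ2, inner_neg_right] at h
  linarith

lemma aux_jnorm (J : V →ₗ[ℝ] V) (hJiso : ∀ x y : V, ⟪J x, J y⟫ = ⟪x, y⟫) (x : V) :
    ‖J x‖ = ‖x‖ := by
  have h := hJiso x x
  rw [real_inner_self_eq_norm_sq, real_inner_self_eq_norm_sq] at h
  nlinarith [norm_nonneg (J x), norm_nonneg x]

lemma aux_jxx (J : V →ₗ[ℝ] V) (hJiso : ∀ x y : V, ⟪J x, J y⟫ = ⟪x, y⟫)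
    (hJ2 : ∀ x : V, J (J x) = -x) (x : V) : ⟪J x, x⟫ = 0 := by
  have h := aux_jskew J hJiso hJ2 x x
  have h2 := real_inner_comm (J x) x
  linarith

lemma aux_axx (A : V →ₗ[ℝ] V) (hAskew : ∀ x y : V, ⟪A x, y⟫ = -⟪x, A y⟫) (x : V) :
    ⟪A x, x⟫ = 0 := by
  have h := hAskew x x
  have h2 := real_inner_comm (A x) x
  linarith

variable (J : V →ₗ[ℝ] V) (R : V →ₗ[ℝ] V →ₗ[ℝ] V →ₗ[ℝ] V →ₗ[ℝ] ℝ) (A : V →ₗ[ℝ] V)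

lemma aux_Rskew2 (hskew : ∀ X Y Z W : V, R X Y Z W = - R Y X Z W)
    (hpair : ∀ X Y Z W : V, R X Y Z W = R Z W X Y) (X Y Z W : V) :
    R X Y Z W = - R X Y W Z := by
  have h1 := hpair X Y Z W
  have h2 := hskew Z W X Y
  have h3 := hpair W Z X Y
  linarith

lemma aux_R13 (hskew : ∀ X Y Z W : V, R X Y Z W = - R Y X Z W)
    (hpair : ∀ X Y Z W : V, R X Y Z W = R Z W X Y) (X Y Z : V) :
    R X Y Y Z = R Z Y Y X := by
  have h1 := hpair X Y Y Z
  have h2 := hskew Y Z X Y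
  have h3 := aux_Rskew2 R hskew hpair Z Y X Y
  have h4 := hskew Z Y Y X
  linarith

lemma aux_Rsub (R : V →ₗ[ℝ] V →ₗ[ℝ] V →ₗ[ℝ] V →ₗ[ℝ] ℝ) (a b x y z : V) :
    R (a - b) x y z = R a x y z - R b x y z := by
  rw [sub_eq_add_neg, map_add, ← neg_one_smul ℝ b, map_smul]
  simp only [LinearMap.add_apply, LinearMap.smul_apply, smul_eq_mul]
  ring

lemma aux_L1
    (hE : ∀ v : V, ‖v‖ = 1 → ∀ w : V,
      (⟪w, v⟫ = 0 ∧ ∀ u : V, R w v v u = ⟪w, u⟫) ↔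
        w ∈ (Submodule.span ℝ {v, A v})ᗮ) :
    ∀ v : V, ‖v‖ = 1 → ∀ w : V, ⟪w, v⟫ = 0 → ⟪w, A v⟫ = 0 →
      ∀ u : V, R w v v u = ⟪w, u⟫ := by
  intro v hv w h1 h2 u
  have h1' : ⟪v, w⟫ = 0 := by rw [real_inner_comm]; exact h1
  have h2' : ⟪A v, w⟫ = 0 := by rw [real_inner_comm]; exact h2
  have hmem : w ∈ (Submodule.span ℝ ({v, A v} : Set V))ᗮ := by
    rw [Submodule.mem_orthogonal]
    intro x hx
    rw [Submodule.mem_span_pair] at hx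
    obtain ⟨c, d, rfl⟩ := hx
    simp [inner_add_left, real_inner_smul_left, h1', h2']
  exact ((hE v hv w).mpr hmem).2 u

lemma aux_L1'
    (hE : ∀ v : V, ‖v‖ = 1 → ∀ w : V,
      (⟪w, v⟫ = 0 ∧ ∀ u : V, R w v v u = ⟪w, u⟫) ↔
        w ∈ (Submodule.span ℝ {v, A v})ᗮ) :
    ∀ v : V, ‖v‖ = 1 → ∀ w : V, ⟪w, v⟫ = 0 → (∀ u : V, R w v v u = ⟪w, u⟫) →
      ⟪w, A v⟫ = 0 := by
  intro v hv w h1 h2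
  have hmem := (hE v hv w).mp ⟨h1, h2⟩
  rw [Submodule.mem_orthogonal] at hmem
  have := hmem (A v) (Submodule.subset_span (by simp))
  rw [real_inner_comm]; exact this

lemma aux_L1g
    (L1 : ∀ v : V, ‖v‖ = 1 → ∀ w : V, ⟪w, v⟫ = 0 → ⟪w, A v⟫ = 0 →
      ∀ u : V, R w v v u = ⟪w, u⟫) :
    ∀ y : V, y ≠ 0 → ∀ w : V, ⟪w, y⟫ = 0 → ⟪w, A y⟫ = 0 →
      ∀ u : V, R w y y u = ⟪y, y⟫ * ⟪w, u⟫ := by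
  intro y hy w h1 h2 u
  have hc : ‖y‖ ≠ 0 := norm_ne_zero_iff.mpr hy
  have hv : ‖(‖y‖⁻¹ • y)‖ = 1 := norm_smul_inv_norm (𝕜 := ℝ) hy
  have h1' : ⟪w, ‖y‖⁻¹ • y⟫ = 0 := by rw [real_inner_smul_right, h1, mul_zero]
  have h2' : ⟪w, A (‖y‖⁻¹ • y)⟫ = 0 := by rw [map_smul, real_inner_smul_right, h2, mul_zero]
  have h := L1 (‖y‖⁻¹ • y) hv w h1' h2' u
  rw [map_smul, map_smul] at h
  simp only [LinearMap.smul_apply, smul_eq_mul] at h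
  have hyy : ⟪y, y⟫ = ‖y‖ ^ 2 := real_inner_self_eq_norm_sq y
  rw [hyy]
  field_simp at h ⊢
  nlinarith [h]

lemma aux_T2'
    (hskew : ∀ X Y Z W : V, R X Y Z W = - R Y X Z W)
    (hAskew : ∀ x y : V, ⟪A x, y⟫ = -⟪x, A y⟫)
    (L1 : ∀ v : V, ‖v‖ = 1 → ∀ w : V, ⟪w, v⟫ = 0 → ⟪w, A v⟫ = 0 →
      ∀ u : V, R w v v u = ⟪w, u⟫) :
    ∀ v : V, ‖v‖ = 1 → ∀ u : V,
      ⟪A v, A v⟫ * R u v v (A v) = ⟪u, A v⟫ * R (A v) v v (A v) := by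
  intro v hv u
  have hvv : ⟪v, v⟫ = 1 := by rw [real_inner_self_eq_norm_sq, hv]; norm_num
  have hAvv : ⟪A v, v⟫ = 0 := aux_axx A hAskew v
  have hvAv : ⟪v, A v⟫ = 0 := by rw [real_inner_comm]; exact hAvv
  have h1 : ⟪(⟪A v, A v⟫ : ℝ) • u - (⟪A v, A v⟫ * ⟪u, v⟫) • v - ⟪u, A v⟫ • (A v), v⟫ = 0 := by
    simp only [inner_sub_left, real_inner_smul_left]
    rw [hvv, hAvv]; ring
  have h2 : ⟪(⟪A v, A v⟫ : ℝ) • u - (⟪A v, A v⟫ * ⟪u, v⟫) • v - ⟪u, A v⟫ • (A v), A v⟫ = 0 := by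
    simp only [inner_sub_left, real_inner_smul_left]
    rw [hvAv]; ring
  have h := L1 v hv _ h1 h2 (A v)
  rw [h2] at h
  simp only [map_sub, map_smul, aux_Rsub, LinearMap.sub_apply, LinearMap.smul_apply, smul_eq_mul] at h
  have hRvv : R v v v (A v) = 0 := by have := hskew v v v (A v); linarith
  linear_combination h + (⟪A v, A v⟫ * ⟪u, v⟫) * hRvv

lemma aux_lam_ne
    (hskew : ∀ X Y Z W : V, R X Y Z W = - R Y X Z W)
    (hpair : ∀ X Y Z W : V, R X Y Z W = R Z W X Y)
    (hAskew : ∀ x y : V, ⟪A x, y⟫ = -⟪x, A y⟫)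
    (hAinv : Function.Bijective A)
    (hE : ∀ v : V, ‖v‖ = 1 → ∀ w : V,
      (⟪w, v⟫ = 0 ∧ ∀ u : V, R w v v u = ⟪w, u⟫) ↔
        w ∈ (Submodule.span ℝ {v, A v})ᗮ)
    (L1 : ∀ v : V, ‖v‖ = 1 → ∀ w : V, ⟪w, v⟫ = 0 → ⟪w, A v⟫ = 0 →
      ∀ u : V, R w v v u = ⟪w, u⟫) :
    ∀ v : V, ‖v‖ = 1 → R (A v) v v (A v) ≠ ⟪A v, A v⟫ := by
  intro v hv heq
  have hv0 : v ≠ 0 := by intro h; rw [h, norm_zero] at hv; norm_num at hv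
  have hA0 : A v ≠ 0 := by
    intro h
    exact hv0 (hAinv.injective (by simp [h]))
  have hp : ⟪A v, A v⟫ ≠ 0 := by
    intro h
    exact hA0 (inner_self_eq_zero.mp h)
  have hAvv : ⟪A v, v⟫ = 0 := aux_axx A hAskew v
  have hall : ∀ u : V, R (A v) v v u = ⟪A v, u⟫ := by
    intro u
    have h := aux_T2' R A hskew hAskew L1 v hv u
    rw [heq] at h
    have h13 := aux_R13 R hskew hpair (A v) v u
    have hz : ⟪A v, A v⟫ * (R u v v (A v) - ⟪u, A v⟫) = 0 := by linear_combination h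
    rcases mul_eq_zero.mp hz with h' | h'
    · exact absurd h' hp
    · rw [h13, real_inner_comm]; linarith
  exact hp (aux_L1' R A hE v hv (A v) hAvv hall)

lemma aux_P1a
    (hAskew : ∀ x y : V, ⟪A x, y⟫ = -⟪x, A y⟫)
    (L1 : ∀ v : V, ‖v‖ = 1 → ∀ w : V, ⟪w, v⟫ = 0 → ⟪w, A v⟫ = 0 →
      ∀ u : V, R w v v u = ⟪w, u⟫)
    (L1g : ∀ y : V, y ≠ 0 → ∀ w : V, ⟪w, y⟫ = 0 → ⟪w, A y⟫ = 0 →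
      ∀ u : V, R w y y u = ⟪y, y⟫ * ⟪w, u⟫) :
    ∀ v w e' : V, ‖v‖ = 1 → ‖w‖ = 1 → ⟪w, v⟫ = 0 → ⟪w, A v⟫ = 0 →
      ⟪e', v⟫ = 0 → ⟪e', w⟫ = 0 → ⟪e', A v⟫ = 0 →
      ⟪A v, A v⟫ * (R e' v w (A v) + R e' w v (A v))
        = (R (A v) v v (A v) - ⟪A v, A v⟫) * ⟪e', A w⟫ := by
  intro v w e' hv hw hwv hwAv hev hew heAv
  have hvv : ⟪v, v⟫ = 1 := by rw [real_inner_self_eq_norm_sq, hv]; norm_num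
  have hww : ⟪w, w⟫ = 1 := by rw [real_inner_self_eq_norm_sq, hw]; norm_num
  have hvw : ⟪v, w⟫ = 0 := by rw [real_inner_comm]; exact hwv
  have key : ∀ t : ℝ,
      (⟪A v, A v⟫ + t * (⟪A v, A w⟫ + ⟪A w, A v⟫) + t ^ 2 * ⟪A w, A w⟫) *
        (R e' v v (A v) + t * R e' v w (A v) + t * R e' w v (A v) + t ^ 2 * R e' w w (A v))
      - (⟪e', A v⟫ + t * ⟪e', A w⟫) *
        (R (A v) v v (A v) + t * R (A v) v w (A v) + t * R (A v) w v (A v)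
          + t ^ 2 * R (A v) w w (A v)
          + t * R (A w) v v (A v) + t ^ 2 * R (A w) v w (A v) + t ^ 2 * R (A w) w v (A v)
          + t ^ 3 * R (A w) w w (A v))
      = (⟪v, v⟫ + t * ⟪v, w⟫ + t * ⟪w, v⟫ + t ^ 2 * ⟪w, w⟫) *
        ((⟪A v, A v⟫ + t * (⟪A v, A w⟫ + ⟪A w, A v⟫) + t ^ 2 * ⟪A w, A w⟫) * ⟪e', A v⟫
          - (⟪e', A v⟫ + t * ⟪e', A w⟫) * (⟪A v, A v⟫ + t * ⟪A w, A v⟫)) := by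
    intro t
    have hyy : ⟪v + t • w, v + t • w⟫ = 1 + t ^ 2 := by
      simp only [inner_add_left, inner_add_right, real_inner_smul_left, real_inner_smul_right,
        hvv, hww, hvw, hwv]
      ring
    have hy0 : v + t • w ≠ 0 := by
      intro h
      rw [h, inner_zero_left] at hyy
      nlinarith
    have hAy : A (v + t • w) = A v + t • A w := by rw [map_add, map_smul]
    have hm1 : ⟪A v, v⟫ = 0 := by
      have h := hAskew v v; have h2 := real_inner_comm (A v) v; linarith
    have hm2 : ⟪A w, w⟫ = 0 := by
      have h := hAskew w w; have h2 := real_inner_comm (A w) w; linarith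
    have hm3 : ⟪A v, w⟫ = 0 := by rw [real_inner_comm]; exact hwAv
    have hm4 : ⟪A w, v⟫ = 0 := by rw [hAskew w v, hwAv, neg_zero]
    set z := (⟪A v + t • A w, A v + t • A w⟫ : ℝ) • e'
        - (⟪e', A v + t • A w⟫ : ℝ) • (A v + t • A w) with hz
    have hzy : ⟪z, v + t • w⟫ = 0 := by
      rw [hz]
      simp only [inner_sub_left, inner_add_left, inner_add_right, real_inner_smul_left,
        real_inner_smul_right, hev, hew, hm1, hm2, hm3, hm4]
      ring
    have hzA : ⟪z, A (v + t • w)⟫ = 0 := by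
      rw [hz, hAy]
      simp only [inner_sub_left, real_inner_smul_left]
      ring
    have h := L1g (v + t • w) hy0 z hzy hzA (A v)
    rw [hz] at h
    simp only [map_sub, map_smul, map_add, aux_Rsub, LinearMap.sub_apply, LinearMap.smul_apply,
      LinearMap.add_apply, smul_eq_mul, inner_sub_left, inner_add_left, inner_add_right,
      real_inner_smul_left, real_inner_smul_right] at h
    linear_combination h
  have hEvv : R e' v v (A v) = 0 := by
    rw [L1 v hv e' hev heAv (A v), heAv]
  linear_combination (3/4 : ℝ) * key 1 - (3/4 : ℝ) * key (-1)
    - (3/20 : ℝ) * key 2 + (3/20 : ℝ) * key (-2)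
    + (1/60 : ℝ) * key 3 - (1/60 : ℝ) * key (-3)
    - (⟪A v, A w⟫ + ⟪A w, A v⟫) * hEvv
    + (R (A v) v w (A v) + R (A v) w v (A v) + R (A w) v v (A v) + ⟪A v, A w⟫ * ⟪v, v⟫) * heAv
    - (⟪A v, A v⟫ * ⟪e', A w⟫) * hvv

lemma aux_CURV
    (hJiso : ∀ x y : V, ⟪J x, J y⟫ = ⟪x, y⟫)
    (hJ2 : ∀ x : V, J (J x) = -x)
    (hskew : ∀ X Y Z W : V, R X Y Z W = - R Y X Z W)
    (hpair : ∀ X Y Z W : V, R X Y Z W = R Z W X Y)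
    (hbianchi : ∀ X Y Z W : V, R X Y Z W + R Y Z X W + R Z X Y W = 0)
    (hkahler : ∀ X Y Z W : V, R (J X) (J Y) Z W = R X Y Z W)
    (L1 : ∀ v : V, ‖v‖ = 1 → ∀ w : V, ⟪w, v⟫ = 0 → ⟪w, A v⟫ = 0 →
      ∀ u : V, R w v v u = ⟪w, u⟫)
    (P1a : ∀ v w e' : V, ‖v‖ = 1 → ‖w‖ = 1 → ⟪w, v⟫ = 0 → ⟪w, A v⟫ = 0 →
      ⟪e', v⟫ = 0 → ⟪e', w⟫ = 0 → ⟪e', A v⟫ = 0 →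
      ⟪A v, A v⟫ * (R e' v w (A v) + R e' w v (A v))
        = (R (A v) v v (A v) - ⟪A v, A v⟫) * ⟪e', A w⟫) :
    ∀ u1 u2 : V, ∀ s1 s2 : ℝ, ‖u1‖ = 1 → ‖u2‖ = 1 → ⟪u2, u1⟫ = 0 → ⟪u2, J u1⟫ = 0 →
      A u1 = s1 • J u1 → A (J u1) = -(s1 • u1) → A u2 = s2 • J u2 → s1 ≠ 0 →
      3 * s1 = (R (J u1) u1 u1 (J u1) - 1) * s2 := by
  intro u1 u2 s1 s2 h1 h2 h21 h2J1 hA1 hAJ1 hA2 hs1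
  have hu1u1 : ⟪u1, u1⟫ = 1 := by rw [real_inner_self_eq_norm_sq, h1]; norm_num
  have hu2u2 : ⟪u2, u2⟫ = 1 := by rw [real_inner_self_eq_norm_sq, h2]; norm_num
  have hJ1 : ‖J u1‖ = 1 := by rw [aux_jnorm J hJiso, h1]
  have hJ2n : ‖J u2‖ = 1 := by rw [aux_jnorm J hJiso, h2]
  have h12 : ⟪u1, u2⟫ = 0 := by rw [real_inner_comm]; exact h21
  have hJ11 : ⟪J u1, J u1⟫ = 1 := by rw [hJiso]; exact hu1u1
  have hJ22 : ⟪J u2, J u2⟫ = 1 := by rw [hJiso]; exact hu2u2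
  have hJ12 : ⟪J u1, J u2⟫ = 0 := by rw [hJiso]; exact h12
  have hJ21 : ⟪J u2, J u1⟫ = 0 := by rw [hJiso]; exact h21
  have hJ1u2 : ⟪J u1, u2⟫ = 0 := by rw [real_inner_comm]; exact h2J1
  have hu1J2 : ⟪u1, J u2⟫ = 0 := by
    have h := aux_jskew J hJiso hJ2 u1 u2
    linarith [hJ1u2]
  have hJ2u1 : ⟪J u2, u1⟫ = 0 := by rw [real_inner_comm]; exact hu1J2
  have hJ2u2 : ⟪J u2, u2⟫ = 0 := aux_jxx J hJiso hJ2 u2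
  have hJ1u1 : ⟪J u1, u1⟫ = 0 := aux_jxx J hJiso hJ2 u1
  have hu2Au1 : ⟪u2, A u1⟫ = 0 := by
    rw [hA1, real_inner_smul_right, h2J1, mul_zero]
  -- (i) sec(u1,u2)=1
  have h_i : R u2 u1 u1 u2 = 1 := by
    rw [L1 u1 h1 u2 h21 hu2Au1 u2, hu2u2]
  -- (iii) sec(u2,u1)=1
  have hu1Au2 : ⟪u1, A u2⟫ = 0 := by
    rw [hA2, real_inner_smul_right, hu1J2, mul_zero]
  have h_iii : R u1 u2 u2 u1 = 1 := by
    rw [L1 u2 h2 u1 h12 hu1Au2 u1, hu1u1]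
  -- (iv) sec(J u1, u2) = 1
  have hu2AJ1 : ⟪u2, A (J u1)⟫ = 0 := by
    rw [hAJ1, inner_neg_right, real_inner_smul_right, h21, mul_zero, neg_zero]
  have h_iv : R u2 (J u1) (J u1) u2 = 1 := by
    rw [L1 (J u1) hJ1 u2 h2J1 hu2AJ1 u2, hu2u2]
  -- (iiib) sec(u2, J u1) = 1
  have hJ1Au2 : ⟪J u1, A u2⟫ = 0 := by
    rw [hA2, real_inner_smul_right, hJ12, mul_zero]
  have h3b : R (J u1) u2 u2 (J u1) = 1 := by
    rw [L1 u2 h2 (J u1) hJ1u2 hJ1Au2 (J u1), hJ11]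
  -- hmid : R (J u1) (J u2) u1 u2 = -1
  have hmid : R (J u1) (J u2) u1 u2 = -1 := by
    rw [hkahler u1 u2 u1 u2]
    have := aux_Rskew2 R hskew hpair u1 u2 u1 u2
    linarith [h_iii]
  -- hlast : R (J u2) u1 (J u1) u2 = -1
  have hlast : R (J u2) u1 (J u1) u2 = -1 := by
    have h := hkahler u2 (-(J u1)) (J u1) u2
    rw [map_neg, hJ2, neg_neg] at h
    -- h : R (J u2) u1 (J u1) u2 = R u2 (-(J u1)) (J u1) u2
    rw [h]
    simp only [map_neg, LinearMap.neg_apply]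
    linarith [h_iv]
  -- bisectional
  have hBis : R u1 (J u1) (J u2) u2 = 2 := by
    have hb := hbianchi u1 (J u1) (J u2) u2
    linarith [hmid, hlast]
  -- T_A
  have hTA : R (J u1) u2 u1 (J u2) = 1 := by
    have hb := hbianchi (J u1) u2 u1 (J u2)
    have hk2 : R u2 u1 (J u1) (J u2) = R u2 u1 u1 u2 := by
      have p1 := hpair u2 u1 (J u1) (J u2)
      have p2 := hkahler u1 u2 u2 u1
      have p3 := hpair (J u1) (J u2) u2 u1
      have p4 := hpair u1 u2 u2 u1
      linarith
    have hsk : R u1 (J u1) u2 (J u2) = - R u1 (J u1) (J u2) u2 :=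
      aux_Rskew2 R hskew hpair u1 (J u1) u2 (J u2)
    linarith [h_i, hBis]
  -- reorientations
  have hTA' : R (J u2) u1 u2 (J u1) = 1 := by
    have p1 := hpair (J u2) u1 u2 (J u1)
    have p2 := hskew u2 (J u1) (J u2) u1
    have p3 := aux_Rskew2 R hskew hpair (J u1) u2 (J u2) u1
    have p4 := aux_Rskew2 R hskew hpair (J u1) u2 u1 (J u2)
    linarith [hTA]
  have hTB' : R (J u2) u2 u1 (J u1) = 2 := by
    have p1 := hpair (J u2) u2 u1 (J u1)
    linarith [hBis]
  -- P1a instance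
  have he'1 : ⟪J u2, u1⟫ = 0 := hJ2u1
  have he'A : ⟪J u2, A u1⟫ = 0 := by
    rw [hA1, real_inner_smul_right, hJ21, mul_zero]
  have hP := P1a u1 u2 (J u2) h1 h2 h21 hu2Au1 hJ2u1 hJ2u2 he'A
  rw [hA1, hA2] at hP
  simp only [map_smul, LinearMap.smul_apply, smul_eq_mul, real_inner_smul_left,
    real_inner_smul_right, hJ11, hJ22] at hP
  -- hP is now polynomial in s1, s2 and curvature values
  have hP2 : s1 ^ 2 * (3 * s1 - (R (J u1) u1 u1 (J u1) - 1) * s2) = 0 := by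
    linear_combination hP - (s1 * s1 * s1) * hTA' - (s1 * s1 * s1) * hTB'
      + (s1 * hTA') * 0
  rcases mul_eq_zero.mp hP2 with h' | h'
  · exact absurd (pow_eq_zero_iff (by norm_num)|>.mp h') hs1
  · linarith

lemma tst_T4a
    (hJiso : ∀ x y : V, ⟪J x, J y⟫ = ⟪x, y⟫)
    (hJ2 : ∀ x : V, J (J x) = -x)
    (hpair : ∀ X Y Z W : V, R X Y Z W = R Z W X Y)
    (hkahler : ∀ X Y Z W : V, R (J X) (J Y) Z W = R X Y Z W)
    (hE : ∀ v : V, ‖v‖ = 1 → ∀ w : V,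
      (⟪w, v⟫ = 0 ∧ ∀ u : V, R w v v u = ⟪w, u⟫) ↔
        w ∈ (Submodule.span ℝ {v, A v})ᗮ)
    (L1 : ∀ v : V, ‖v‖ = 1 → ∀ w : V, ⟪w, v⟫ = 0 → ⟪w, A v⟫ = 0 →
      ∀ u : V, R w v v u = ⟪w, u⟫)
    (jskew : ∀ x y : V, ⟪J x, y⟫ = -⟪x, J y⟫) :
    ∀ y : V, ‖y‖ = 1 → ∀ z : V, ⟪z, y⟫ = 0 → ⟪z, A y⟫ = 0 →
      ⟪J z, A (J y)⟫ = 0 := by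
  intro y hy z h1 h2
  have hJy : ‖J y‖ = 1 := by
    have h := hJiso y y
    rw [real_inner_self_eq_norm_sq, real_inner_self_eq_norm_sq] at h
    nlinarith [norm_nonneg (J y), norm_nonneg y]
  have hJzJy : ⟪J z, J y⟫ = 0 := by rw [hJiso]; exact h1
  have hall : ∀ u : V, R (J z) (J y) (J y) u = ⟪J z, u⟫ := by
    intro u
    have e1 : R (J z) (J y) (J y) u = R z y (J y) u := hkahler z y (J y) u
    have e2 : R z y (J y) u = R (J y) u z y := hpair z y (J y) u
    have e3 : R (J y) (J (-(J u))) z y = R y (-(J u)) z y := hkahler y (-(J u)) z y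
    rw [map_neg, hJ2, neg_neg] at e3
    -- e3 : R (J y) u z y = R y (-(J u)) z y
    have e4 : R y (-(J u)) z y = - R y (J u) z y := by
      rw [map_neg]; simp only [LinearMap.neg_apply]
    have e5 : R z y y (J u) = R y (J u) z y := hpair z y y (J u)
    have e6 : R z y y (J u) = ⟪z, J u⟫ := L1 y hy z h1 h2 (J u)
    have e7 : ⟪J z, u⟫ = -⟪z, J u⟫ := jskew z u
    linarith
  exact aux_L1' R A hE (J y) hJy (J z) hJzJy hall

lemma tst_T4b
    (hJiso : ∀ x y : V, ⟪J x, J y⟫ = ⟪x, y⟫)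
    (hJ2 : ∀ x : V, J (J x) = -x)
    (hAskew : ∀ x y : V, ⟪A x, y⟫ = -⟪x, A y⟫)
    (jskew : ∀ x y : V, ⟪J x, y⟫ = -⟪x, J y⟫)
    (T4a : ∀ y : V, ‖y‖ = 1 → ∀ z : V, ⟪z, y⟫ = 0 → ⟪z, A y⟫ = 0 →
      ⟪J z, A (J y)⟫ = 0) :
    ∀ y : V, ‖y‖ = 1 → ∃ b : ℝ, A (J y) = b • (J (A y)) := by
  intro y hy
  have hmem : J (A (J y)) ∈ (Submodule.span ℝ ({y, A y} : Set V))ᗮᗮ := by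
    rw [Submodule.mem_orthogonal]
    intro x hx
    rw [Submodule.mem_orthogonal] at hx
    have hxy : ⟪x, y⟫ = 0 := by
      rw [real_inner_comm]; exact hx y (Submodule.subset_span (by simp))
    have hxAy : ⟪x, A y⟫ = 0 := by
      rw [real_inner_comm]; exact hx (A y) (Submodule.subset_span (by simp))
    have h := T4a y hy x hxy hxAy
    have h2 := jskew x (A (J y))
    linarith
  rw [Submodule.orthogonal_orthogonal] at hmem
  rw [Submodule.mem_span_pair] at hmem
  obtain ⟨a, b, hab⟩ := hmem
  have hexp : A (J y) = (-a) • J y + (-b) • J (A y) := by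
    have h := hJ2 (A (J y))
    rw [← hab] at h
    -- h : J (a • y + b • A y) = - A (J y)
    rw [map_add, map_smul, map_smul] at h
    have := congrArg Neg.neg h
    rw [neg_neg] at this
    rw [← this]
    module
  have hortho : ⟪A (J y), J y⟫ = 0 := by
    have h := hAskew (J y) (J y)
    have h2 := real_inner_comm (A (J y)) (J y)
    linarith
  have hJyJy : ⟪J y, J y⟫ = 1 := by
    rw [hJiso, real_inner_self_eq_norm_sq, hy]; norm_num
  have hJAyJy : ⟪J (A y), J y⟫ = 0 := by
    rw [hJiso]
    have h := hAskew y y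
    have h2 := real_inner_comm (A y) y
    linarith
  have ha : a = 0 := by
    rw [hexp] at hortho
    simp only [inner_add_left, real_inner_smul_left, hJyJy, hJAyJy] at hortho
    linarith
  refine ⟨-b, ?_⟩
  rw [hexp, ha]
  module

lemma tst_T4c
    (hdim : 6 ≤ Module.finrank ℝ V)
    (hJ2 : ∀ x : V, J (J x) = -x)
    (hAinv : Function.Bijective A)
    (T4b : ∀ y : V, ‖y‖ = 1 → ∃ b : ℝ, A (J y) = b • (J (A y))) :
    ∃ c : ℝ, ∀ x : V, A (J x) = c • (J (A x)) := by
  have hJinj : Function.Injective J := by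
    intro x y hxy
    have := congrArg J hxy
    rw [hJ2, hJ2] at this
    exact neg_injective this
  have hginj : Function.Injective (fun x => J (A x)) := fun x y hxy =>
    hAinv.injective (hJinj hxy)
  -- T4b for arbitrary nonzero x
  have T4b' : ∀ x : V, x ≠ 0 → ∃ b : ℝ, A (J x) = b • (J (A x)) := by
    intro x hx
    obtain ⟨b, hb⟩ := T4b (‖x‖⁻¹ • x) (norm_smul_inv_norm (𝕜 := ℝ) hx)
    refine ⟨b, ?_⟩
    rw [map_smul, map_smul, map_smul, map_smul] at hb
    have hn : (‖x‖ : ℝ) ≠ 0 := norm_ne_zero_iff.mpr hx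
    have h2 := congrArg (fun z => (‖x‖ : ℝ) • z) hb
    simp only [smul_smul] at h2
    rw [mul_inv_cancel₀ hn, one_smul] at h2
    rw [h2]
    have he : ‖x‖ * (b * ‖x‖⁻¹) = b := by field_simp
    rw [he]
  -- nontrivial
  have : Nontrivial V := Module.nontrivial_of_finrank_pos (R := ℝ) (by omega)
  obtain ⟨x0, hx0⟩ := exists_ne (0 : V)
  obtain ⟨c, hc⟩ := T4b' x0 hx0
  refine ⟨c, ?_⟩
  intro x
  by_cases hx : x = 0
  · simp [hx]
  by_cases hdep : ∃ μ : ℝ, x = μ • x0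
  · obtain ⟨μ, rfl⟩ := hdep
    rw [map_smul, map_smul, map_smul, map_smul, hc, smul_comm]
  · -- independent case
    obtain ⟨bx, hbx⟩ := T4b' x hx
    have hsum : x + x0 ≠ 0 := by
      intro h
      apply hdep
      exact ⟨-1, by rw [neg_smul, one_smul]; linear_combination (norm := module) h⟩
    obtain ⟨bs, hbs⟩ := T4b' (x + x0) hsum
    have hkey : (bs - bx) • (J (A x)) + (bs - c) • (J (A x0)) = 0 := by
      have h1 : A (J (x + x0)) = A (J x) + A (J x0) := by rw [map_add, map_add]
      have h2 : J (A (x + x0)) = J (A x) + J (A x0) := by rw [map_add, map_add]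
      rw [hbs, h2, hbx, hc] at h1
      linear_combination (norm := module) h1
    have hindep : ∀ s t : ℝ, s • (J (A x)) + t • (J (A x0)) = 0 → s = 0 ∧ t = 0 := by
      intro s t hst
      have : J (A (s • x + t • x0)) = 0 := by
        rw [map_add, map_smul, map_smul, map_add, map_smul, map_smul]
        exact hst
      have hz : s • x + t • x0 = 0 := by
        apply hginj
        simpa using this
      by_cases hs : s = 0
      · refine ⟨hs, ?_⟩
        rw [hs, zero_smul, zero_add] at hz
        by_contra ht
        exact hx0 ((smul_eq_zero.mp hz).resolve_left ht)
      · exfalso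
        apply hdep
        refine ⟨-t / s, ?_⟩
        have := congrArg (fun z => (s⁻¹ : ℝ) • z) hz
        simp only [smul_add, smul_smul, smul_zero] at this
        rw [inv_mul_cancel₀ hs, one_smul] at this
        have hx' : x = -(s⁻¹ * t) • x0 := by
          rw [neg_smul]
          linear_combination (norm := module) this
        rw [hx']
        congr 1
        field_simp
      
    obtain ⟨h1, h2⟩ := hindep _ _ hkey
    have : bx = c := by
      have e1 : bs = bx := by linarith [sub_eq_zero.mp (by linarith : bs - bx = 0)]
      have e2 : bs = c := by linarith [sub_eq_zero.mp (by linarith : bs - c = 0)]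
      linarith
    rw [hbx, this]

lemma tst_T4d
    (hdim : 6 ≤ Module.finrank ℝ V)
    (hJ2 : ∀ x : V, J (J x) = -x)
    (hAinv : Function.Bijective A)
    (hAskew : ∀ x y : V, ⟪A x, y⟫ = -⟪x, A y⟫)
    (jskew : ∀ x y : V, ⟪J x, y⟫ = -⟪x, J y⟫)
    {c : ℝ} (hc : ∀ x : V, A (J x) = c • (J (A x))) :
    c = 1 ∨ c = -1 := by
  have : Nontrivial V := Module.nontrivial_of_finrank_pos (R := ℝ) (by omega)
  obtain ⟨x0, hx0⟩ := exists_ne (0 : V)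
  have hq : J (A x0) ≠ 0 := by
    intro h
    have := congrArg J h
    rw [hJ2, map_zero] at this
    exact hx0 (hAinv.injective (by simp [neg_eq_zero.mp this]))
  have key : ∀ x y : V, ⟪J (A x), y⟫ = c * (c * ⟪J (A x), y⟫) := by
    intro x y
    have e1 : ⟪J (A x), y⟫ = -⟪A x, J y⟫ := jskew (A x) y
    have e2 : ⟪A x, J y⟫ = -⟪x, A (J y)⟫ := hAskew x (J y)
    have e3 : ⟪x, A (J y)⟫ = c * ⟪x, J (A y)⟫ := by
      rw [hc y, real_inner_smul_right]
    have e4 : ⟪J x, A y⟫ = -⟪x, J (A y)⟫ := jskew x (A y)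
    have e5 : ⟪A (J x), y⟫ = -⟪J x, A y⟫ := hAskew (J x) y
    have e6 : ⟪A (J x), y⟫ = c * ⟪J (A x), y⟫ := by
      rw [hc x, real_inner_smul_left]
    linear_combination e1 - e2 + e3 + c * e4 - c * e5 + c * e6
  have h := key x0 (J (A x0))
  have hqq : ⟪J (A x0), J (A x0)⟫ ≠ 0 := fun h' => hq (inner_self_eq_zero.mp h')
  have hc2 : c ^ 2 = 1 := by
    have : ⟪J (A x0), J (A x0)⟫ * (1 - c ^ 2) = 0 := by linear_combination h
    rcases mul_eq_zero.mp this with h' | h'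
    · exact absurd h' hqq
    · linarith
  have hfac : (c - 1) * (c + 1) = 0 := by linear_combination hc2
  rcases mul_eq_zero.mp hfac with h' | h'
  · left; linarith
  · right; linarith

lemma tst_anti
    (hdim : 6 ≤ Module.finrank ℝ V)
    (hJiso : ∀ x y : V, ⟪J x, J y⟫ = ⟪x, y⟫)
    (hJ2 : ∀ x : V, J (J x) = -x)
    (hpair : ∀ X Y Z W : V, R X Y Z W = R Z W X Y)
    (hkahler : ∀ X Y Z W : V, R (J X) (J Y) Z W = R X Y Z W)
    (hAinv : Function.Bijective A)
    (hAskew : ∀ x y : V, ⟪A x, y⟫ = -⟪x, A y⟫)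
    (jskew : ∀ x y : V, ⟪J x, y⟫ = -⟪x, J y⟫)
    (jnorm : ∀ x : V, ‖J x‖ = ‖x‖)
    (L1 : ∀ v : V, ‖v‖ = 1 → ∀ w : V, ⟪w, v⟫ = 0 → ⟪w, A v⟫ = 0 →
      ∀ u : V, R w v v u = ⟪w, u⟫)
    (P1a : ∀ v w e' : V, ‖v‖ = 1 → ‖w‖ = 1 → ⟪w, v⟫ = 0 → ⟪w, A v⟫ = 0 →
      ⟪e', v⟫ = 0 → ⟪e', w⟫ = 0 → ⟪e', A v⟫ = 0 →
      ⟪A v, A v⟫ * (R e' v w (A v) + R e' w v (A v))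
        = (R (A v) v v (A v) - ⟪A v, A v⟫) * ⟪e', A w⟫)
    (lam_ne : ∀ v : V, ‖v‖ = 1 → R (A v) v v (A v) ≠ ⟪A v, A v⟫)
    (hc : ∀ x : V, A (J x) = -(J (A x))) :
    False := by
  have : Nontrivial V := Module.nontrivial_of_finrank_pos (R := ℝ) (by omega)
  obtain ⟨x0, hx0⟩ := exists_ne (0 : V)
  set v := ‖x0‖⁻¹ • x0 with hvdef
  have hv : ‖v‖ = 1 := norm_smul_inv_norm (𝕜 := ℝ) hx0
  -- orthogonality of A v and J v
  have horth : ⟪A v, J v⟫ = 0 := by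
    have e1 : ⟪A v, J v⟫ = -⟪v, A (J v)⟫ := hAskew v (J v)
    have e2 : A (J v) = -(J (A v)) := hc v
    have e3 : ⟪J v, A v⟫ = -⟪v, J (A v)⟫ := jskew v (A v)
    have e4 : ⟪A v, J v⟫ = ⟪J v, A v⟫ := real_inner_comm _ _
    rw [e2, inner_neg_right] at e1
    linarith
  have hJvAv : ⟪J v, A v⟫ = 0 := by rw [real_inner_comm]; exact horth
  have hJvv : ⟪J v, v⟫ = 0 := by
    have h := jskew v v
    have h2 := real_inner_comm (J v) v
    linarith
  have hJw : ‖J v‖ = 1 := by rw [jnorm, hv]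
  have hJav : ⟪J (A v), v⟫ = 0 := by
    have h := jskew (A v) v
    linarith [horth]
  have hJaJv : ⟪J (A v), J v⟫ = 0 := by
    rw [hJiso]
    have h := hAskew v v
    have h2 := real_inner_comm (A v) v
    linarith
  have hJaa : ⟪J (A v), A v⟫ = 0 := by
    have h := jskew (A v) (A v)
    have h2 := real_inner_comm (J (A v)) (A v)
    linarith
  have hP := P1a v (J v) (J (A v)) hv hJw hJvv hJvAv hJav hJaJv hJaa
  -- compute the three pieces
  have hv0 : v ≠ 0 := by intro h; rw [h, norm_zero] at hv; norm_num at hv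
  have hA0 : A v ≠ 0 := by
    intro h
    exact hv0 (hAinv.injective (by simp [h]))
  have hp : ⟪A v, A v⟫ ≠ 0 := fun h => hA0 (inner_self_eq_zero.mp h)
  have hT2 : R (J (A v)) (J v) v (A v) = R (A v) v v (A v) := hkahler (A v) v v (A v)
  have hLJa : R (J (A v)) v v (J (A v)) = ⟪J (A v), J (A v)⟫ :=
    L1 v hv (J (A v)) hJav hJaa (J (A v))
  have hJaJa : ⟪J (A v), J (A v)⟫ = ⟪A v, A v⟫ := hJiso (A v) (A v)
  have hT1 : R (J (A v)) v (J v) (A v) = -⟪A v, A v⟫ := by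
    have e1 : R (J (A v)) v (J v) (A v) = R (J v) (A v) (J (A v)) v :=
      hpair (J (A v)) v (J v) (A v)
    have e2 : R (J v) (J (-(J (A v)))) (J (A v)) v = R v (-(J (A v))) (J (A v)) v :=
      hkahler v (-(J (A v))) (J (A v)) v
    rw [map_neg, hJ2, neg_neg] at e2
    -- e2 : R (J v) (A v) (J (A v)) v = R v (-(J (A v))) (J (A v)) v
    have e3 : R v (-(J (A v))) (J (A v)) v = - R v (J (A v)) (J (A v)) v := by
      rw [map_neg]; simp only [LinearMap.neg_apply]
    have e4 : R v (J (A v)) (J (A v)) v = R (J (A v)) v v (J (A v)) :=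
      hpair v (J (A v)) (J (A v)) v
    rw [hJaJa] at hLJa
    linarith
  have hAJv : ⟪J (A v), A (J v)⟫ = -⟪A v, A v⟫ := by
    rw [hc v, inner_neg_right, hJiso]
  rw [hT1, hT2, hAJv] at hP
  -- hP : p * (-p + Ravva) = (Ravva - p) * (-p)
  have hfinal : R (A v) v v (A v) = ⟪A v, A v⟫ := by
    have h2 : 2 * ⟪A v, A v⟫ * (R (A v) v v (A v) - ⟪A v, A v⟫) = 0 := by
      linear_combination hP
    rcases mul_eq_zero.mp h2 with h' | h'
    · rcases mul_eq_zero.mp h' with h'' | h''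
      · norm_num at h''
      · exact absurd h'' hp
    · linarith
  exact lam_ne v hv hfinal

lemma tst_rank1 (a : V) : Module.finrank ℝ (ℝ ∙ a : Submodule ℝ V) ≤ 1 := by
  by_cases ha : a = 0
  · rw [ha, Submodule.span_zero_singleton]
    simp
  · rw [finrank_span_singleton ha]

lemma tst_rank2 (a b : V) :
    Module.finrank ℝ (Submodule.span ℝ {a, b} : Submodule ℝ V) ≤ 2 := by
  have h : (Submodule.span ℝ {a, b} : Submodule ℝ V) = (ℝ ∙ a) ⊔ (ℝ ∙ b) := by
    rw [Submodule.span_insert]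
  rw [h]
  calc Module.finrank ℝ ((ℝ ∙ a) ⊔ (ℝ ∙ b) : Submodule ℝ V)
      ≤ Module.finrank ℝ (ℝ ∙ a : Submodule ℝ V) + Module.finrank ℝ (ℝ ∙ b : Submodule ℝ V) :=
        Submodule.finrank_add_le_finrank_add_finrank _ _
    _ ≤ 2 := by
        have := tst_rank1 (V := V) a
        have := tst_rank1 (V := V) b
        omega

-- find a unit vector orthogonal to a 4-or-less dim span
lemma tst_perp2 (hdim : 6 ≤ Module.finrank ℝ V) (a b : V) :
    ∃ u : V, ‖u‖ = 1 ∧ ⟪u, a⟫ = 0 ∧ ⟪u, b⟫ = 0 := by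
  set K : Submodule ℝ V := Submodule.span ℝ {a, b}
  have hK : Module.finrank ℝ K ≤ 2 := tst_rank2 a b
  have hsum : Module.finrank ℝ K + Module.finrank ℝ Kᗮ = Module.finrank ℝ V :=
    Submodule.finrank_add_finrank_orthogonal K
  have hne : Kᗮ ≠ ⊥ := by
    intro h
    rw [h, finrank_bot] at hsum
    omega
  obtain ⟨x, hxmem, hx0⟩ := Submodule.exists_mem_ne_zero_of_ne_bot hne
  refine ⟨‖x‖⁻¹ • x, norm_smul_inv_norm (𝕜 := ℝ) hx0, ?_, ?_⟩
  · rw [Submodule.mem_orthogonal] at hxmem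
    have h := hxmem a (Submodule.subset_span (by simp))
    have h0 : ⟪x, a⟫ = 0 := by rw [real_inner_comm]; exact h
    rw [real_inner_smul_left, h0, mul_zero]
  · rw [Submodule.mem_orthogonal] at hxmem
    have h := hxmem b (Submodule.subset_span (by simp))
    have h0 : ⟪x, b⟫ = 0 := by rw [real_inner_comm]; exact h
    rw [real_inner_smul_left, h0, mul_zero]

lemma tst_spectral
    (hdim : 6 ≤ Module.finrank ℝ V)
    (hJiso : ∀ x y : V, ⟪J x, J y⟫ = ⟪x, y⟫)
    (hJ2 : ∀ x : V, J (J x) = -x)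
    (hpair : ∀ X Y Z W : V, R X Y Z W = R Z W X Y)
    (hAinv : Function.Bijective A)
    (hAskew : ∀ x y : V, ⟪A x, y⟫ = -⟪x, A y⟫)
    (jskew : ∀ x y : V, ⟪J x, y⟫ = -⟪x, J y⟫)
    (jnorm : ∀ x : V, ‖J x‖ = ‖x‖)
    (CURV : ∀ u1 u2 : V, ∀ s1 s2 : ℝ, ‖u1‖ = 1 → ‖u2‖ = 1 → ⟪u2, u1⟫ = 0 → ⟪u2, J u1⟫ = 0 →
      A u1 = s1 • J u1 → A (J u1) = -(s1 • u1) → A u2 = s2 • J u2 → s1 ≠ 0 →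
      3 * s1 = (R (J u1) u1 u1 (J u1) - 1) * s2)
    (hcom : ∀ x : V, A (J x) = J (A x)) :
    ∀ v : V, ‖v‖ = 1 → R v (A v) (A v) v / ‖A v‖ ^ 2 = 4 := by
  classical
  have hnt : Nontrivial V := Module.nontrivial_of_finrank_pos (R := ℝ) (by omega)
  set S : V →ₗ[ℝ] V := -(J ∘ₗ A) with hSdef
  have hSapp : ∀ x : V, S x = -(J (A x)) := by
    intro x; simp [hSdef]
  have hJS : ∀ x : V, J (S x) = A x := by
    intro x; rw [hSapp, map_neg, hJ2, neg_neg]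
  have hSJ : ∀ x : V, S (J x) = J (S x) := by
    intro x
    rw [hSapp, hSapp, hcom, map_neg]
  have hsym : LinearMap.IsSymmetric S := by
    intro x y
    have e1 : ⟪J (A x), y⟫ = -⟪A x, J y⟫ := jskew (A x) y
    have e2 : ⟪A x, J y⟫ = -⟪x, A (J y)⟫ := hAskew x (J y)
    have e3 : A (J y) = J (A y) := hcom y
    rw [hSapp, hSapp, inner_neg_left, inner_neg_right, e1, e2, e3]
    ring
  have heignz : ∀ (μ : ℝ) (x : V), x ≠ 0 → S x = μ • x → μ ≠ 0 := by
    intro μ x hx0 hSx hμ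
    rw [hμ, zero_smul] at hSx
    have : A x = 0 := by rw [← hJS, hSx, map_zero]
    exact hx0 (hAinv.injective (by simp [this]))
  have hAofS : ∀ (μ : ℝ) (x : V), S x = μ • x → A x = μ • J x := by
    intro μ x hSx
    rw [← hJS, hSx, map_smul]
  have hAJofS : ∀ (μ : ℝ) (x : V), S x = μ • x → A (J x) = -(μ • x) := by
    intro μ x hSx
    rw [hcom, hAofS μ x hSx, map_smul, hJ2, smul_neg]
  by_cases huniq : ∀ μ ν : ℝ, Module.End.eigenspace S μ ≠ ⊥ → Module.End.eigenspace S ν ≠ ⊥ → μ = ν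
  · -- single eigenvalue
    have hbot : (⨆ μ : ℝ, Module.End.eigenspace S μ)ᗮ = ⊥ :=
      hsym.orthogonalComplement_iSup_eigenspaces_eq_bot
    have htop : (⨆ μ : ℝ, Module.End.eigenspace S μ) = ⊤ :=
      Submodule.orthogonal_eq_bot_iff.mp hbot
    have hexist : ∃ s : ℝ, Module.End.eigenspace S s ≠ ⊥ := by
      by_contra h
      push_neg at h
      rw [iSup_congr h] at htop
      simp only [iSup_bot] at htop
      exact bot_ne_top htop
    obtain ⟨s, hs⟩ := hexist
    have heigtop : Module.End.eigenspace S s = ⊤ := by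
      refine le_antisymm le_top ?_
      rw [← htop]
      refine iSup_le fun μ => ?_
      by_cases hμ : Module.End.eigenspace S μ = ⊥
      · rw [hμ]; exact bot_le
      · rw [huniq μ s hμ hs]
    have hallS : ∀ x : V, S x = s • x := by
      intro x
      exact Module.End.mem_eigenspace_iff.mp (heigtop ▸ Submodule.mem_top)
    have hs0 : s ≠ 0 := by
      obtain ⟨x0, hx0⟩ := exists_ne (0 : V)
      exact heignz s x0 hx0 (hallS x0)
    intro v hv
    obtain ⟨u2, hu2n, hu2v, hu2Jv⟩ := tst_perp2 hdim v (J v)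
    have hst := CURV v u2 s s hv hu2n hu2v hu2Jv (hAofS s v (hallS v))
      (hAJofS s v (hallS v)) (hAofS s u2 (hallS u2)) hs0
    have hH : R (J v) v v (J v) = 4 := by
      have h4 : (R (J v) v v (J v) - 4) * s = 0 := by linear_combination -hst
      rcases mul_eq_zero.mp h4 with h' | h'
      · linarith
      · exact absurd h' hs0
    have hAv : A v = s • J v := hAofS s v (hallS v)
    rw [hAv]
    have hnum : R v (s • J v) (s • J v) v = s ^ 2 * 4 := by
      simp only [map_smul, LinearMap.smul_apply, smul_eq_mul]
      have hp := hpair v (J v) (J v) v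
      nlinarith [hH, hp]
    have hden : ‖s • J v‖ ^ 2 = s ^ 2 := by
      rw [norm_smul, jnorm, hv, mul_one, Real.norm_eq_abs, sq_abs]
    rw [hnum, hden]
    field_simp
  · -- two distinct eigenvalues: contradiction
    exfalso
    push_neg at huniq
    obtain ⟨μ, ν, hμ, hν, hμν⟩ := huniq
    obtain ⟨x, hxmem, hx0⟩ := Submodule.exists_mem_ne_zero_of_ne_bot hμ
    have hSx : S x = μ • x := Module.End.mem_eigenspace_iff.mp hxmem
    obtain ⟨x', hxmem', hx0'⟩ := Submodule.exists_mem_ne_zero_of_ne_bot hν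
    have hSx' : S x' = ν • x' := Module.End.mem_eigenspace_iff.mp hxmem'
    set u : V := ‖x‖⁻¹ • x with hudef
    set u' : V := ‖x'‖⁻¹ • x' with hudef'
    have hun : ‖u‖ = 1 := norm_smul_inv_norm (𝕜 := ℝ) hx0
    have hun' : ‖u'‖ = 1 := norm_smul_inv_norm (𝕜 := ℝ) hx0'
    have hSu : S u = μ • u := by
      rw [hudef, map_smul, hSx, smul_comm]
    have hSu' : S u' = ν • u' := by
      rw [hudef', map_smul, hSx', smul_comm]
    have hu0 : u ≠ 0 := by
      intro h; rw [h, norm_zero] at hun; norm_num at hun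
    have hu0' : u' ≠ 0 := by
      intro h; rw [h, norm_zero] at hun'; norm_num at hun'
    have hμ0 : μ ≠ 0 := heignz μ u hu0 hSu
    have hν0 : ν ≠ 0 := heignz ν u' hu0' hSu'
    have hSJu : S (J u) = μ • J u := by rw [hSJ, hSu, map_smul]
    have hSJu' : S (J u') = ν • J u' := by rw [hSJ, hSu', map_smul]
    -- orthogonality between eigenvectors
    have horth : ∀ (a b : V), S a = μ • a → S b = ν • b → ⟪a, b⟫ = 0 := by
      intro a b ha hb
      have h1 := hsym a b
      rw [ha, hb, real_inner_smul_left, real_inner_smul_right] at h1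
      have h2 : (μ - ν) * ⟪a, b⟫ = 0 := by linear_combination h1
      rcases mul_eq_zero.mp h2 with h' | h'
      · exact absurd (by linarith : μ = ν) hμν
      · exact h'
    have huu' : ⟪u', u⟫ = 0 := by rw [real_inner_comm]; exact horth u u' hSu hSu'
    have hu'Ju : ⟪u', J u⟫ = 0 := by rw [real_inner_comm]; exact horth (J u) u' hSJu hSu'
    have huJu' : ⟪u, J u'⟫ = 0 := horth u (J u') hSu hSJu'
    have huu'2 : ⟪u, u'⟫ = 0 := horth u u' hSu hSu'
    -- invariant subspace W
    set K : Submodule ℝ V := Submodule.span ℝ {u, J u} ⊔ Submodule.span ℝ {u', J u'} with hKdef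
    have hKrank : Module.finrank ℝ K ≤ 4 := by
      calc Module.finrank ℝ K
          ≤ Module.finrank ℝ (Submodule.span ℝ {u, J u} : Submodule ℝ V)
            + Module.finrank ℝ (Submodule.span ℝ {u', J u'} : Submodule ℝ V) :=
            Submodule.finrank_add_le_finrank_add_finrank _ _
        _ ≤ 4 := by
            have := tst_rank2 (V := V) u (J u)
            have := tst_rank2 (V := V) u' (J u')
            omega
    have hWne : Kᗮ ≠ ⊥ := by
      intro h
      have hsum := Submodule.finrank_add_finrank_orthogonal K
      rw [h, finrank_bot] at hsum
      omega
    have hmemK : ∀ z ∈ K, ∃ a b c d : ℝ, z = a • u + b • J u + c • u' + d • J u' := by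
      intro z hz
      rw [hKdef, Submodule.mem_sup] at hz
      obtain ⟨y1, hy1, y2, hy2, rfl⟩ := hz
      rw [Submodule.mem_span_pair] at hy1 hy2
      obtain ⟨a, b, rfl⟩ := hy1
      obtain ⟨c, d, rfl⟩ := hy2
      exact ⟨a, b, c, d, by module⟩
    have hWinv : ∀ w ∈ Kᗮ, S w ∈ Kᗮ := by
      intro w hw
      rw [Submodule.mem_orthogonal] at hw ⊢
      intro k hk
      obtain ⟨a, b, c, d, rfl⟩ := hmemK k hk
      have hSk : S (a • u + b • J u + c • u' + d • J u')
          = (a * μ) • u + (b * μ) • J u + (c * ν) • u' + (d * ν) • J u' := by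
        simp only [map_add, map_smul, hSu, hSJu, hSu', hSJu']
        module
      have hkK : ((a * μ) • u + (b * μ) • J u + (c * ν) • u' + (d * ν) • J u') ∈ K := by
        apply Submodule.add_mem
        apply Submodule.add_mem
        · exact Submodule.mem_sup_left (Submodule.mem_span_pair.mpr ⟨a * μ, b * μ, rfl⟩)
        · exact Submodule.mem_sup_right (Submodule.mem_span_pair.mpr ⟨c * ν, 0, by module⟩)
        · exact Submodule.mem_sup_right (Submodule.mem_span_pair.mpr ⟨0, d * ν, by module⟩)
      have hsymkw := hsym (a • u + b • J u + c • u' + d • J u') w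
      rw [hSk] at hsymkw
      rw [← hsymkw]
      exact hw _ hkK
    -- eigenvector inside W
    have hrest_sym : (S.restrict hWinv).IsSymmetric := by
      intro a b
      have h := hsym (a : V) (b : V)
      simp only [Submodule.coe_inner, LinearMap.restrict_coe_apply]
      exact h
    have hWnt : Nontrivial (Kᗮ : Submodule ℝ V) := Submodule.nontrivial_iff_ne_bot.mpr hWne
    have hex : ∃ r : ℝ, Module.End.eigenspace (S.restrict hWinv) r ≠ ⊥ := by
      by_contra h
      push_neg at h
      have := hrest_sym.subsingleton_of_no_eigenvalue_finiteDimensional h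
      exact false_of_nontrivial_of_subsingleton (Kᗮ : Submodule ℝ V)
    obtain ⟨r, hr⟩ := hex
    obtain ⟨xW, hxWmem, hxW0⟩ := Submodule.exists_mem_ne_zero_of_ne_bot hr
    have hSxW : S (xW : V) = r • (xW : V) := by
      have h := Module.End.mem_eigenspace_iff.mp hxWmem
      have h2 := congrArg (Subtype.val : (Kᗮ : Submodule ℝ V) → V) h
      simpa [LinearMap.restrict_coe_apply] using h2
    have hxV0 : (xW : V) ≠ 0 := fun h => hxW0 (Submodule.coe_eq_zero.mp h)
    set u'' : V := ‖(xW : V)‖⁻¹ • (xW : V) with hu''def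
    have hu''n : ‖u''‖ = 1 := norm_smul_inv_norm (𝕜 := ℝ) hxV0
    have hSu'' : S u'' = r • u'' := by
      rw [hu''def, map_smul, hSxW, smul_comm]
    have hu''0 : u'' ≠ 0 := by
      intro h; rw [h, norm_zero] at hu''n; norm_num at hu''n
    have hr0 : r ≠ 0 := heignz r u'' hu''0 hSu''
    have hu''W : u'' ∈ Kᗮ := Submodule.smul_mem _ _ xW.2
    have hu''orth : ∀ z ∈ K, ⟪u'', z⟫ = 0 := by
      intro z hz
      rw [Submodule.mem_orthogonal] at hu''W
      rw [real_inner_comm]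
      exact hu''W z hz
    have hmem_u : u ∈ K := Submodule.mem_sup_left (Submodule.subset_span (by simp))
    have hmem_Ju : J u ∈ K := Submodule.mem_sup_left (Submodule.subset_span (by simp))
    have hmem_u' : u' ∈ K := Submodule.mem_sup_right (Submodule.subset_span (by simp))
    have hmem_Ju' : J u' ∈ K := Submodule.mem_sup_right (Submodule.subset_span (by simp))
    have h1 : ⟪u'', u⟫ = 0 := hu''orth u hmem_u
    have h2 : ⟪u'', J u⟫ = 0 := hu''orth (J u) hmem_Ju
    have h3 : ⟪u'', u'⟫ = 0 := hu''orth u' hmem_u'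
    have h4 : ⟪u'', J u'⟫ = 0 := hu''orth (J u') hmem_Ju'
    -- the four CURV relations
    have c1 := CURV u u' μ ν hun hun' huu' hu'Ju (hAofS μ u hSu) (hAJofS μ u hSu)
      (hAofS ν u' hSu') hμ0
    have c2 := CURV u u'' μ r hun hu''n h1 h2 (hAofS μ u hSu) (hAJofS μ u hSu)
      (hAofS r u'' hSu'') hμ0
    have c3 := CURV u' u ν μ hun' hun huu'2 huJu' (hAofS ν u' hSu') (hAJofS ν u' hSu')
      (hAofS μ u hSu) hν0
    have c4 := CURV u' u'' ν r hun' hu''n h3 h4 (hAofS ν u' hSu') (hAJofS ν u' hSu')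
      (hAofS r u'' hSu'') hν0
    -- algebra: contradiction
    set Hu := R (J u) u u (J u)
    set Hu' := R (J u') u' u' (J u')
    have hHu1 : Hu - 1 ≠ 0 := by
      intro h
      rw [h] at c1
      simp at c1
      exact hμ0 c1
    have hHu1' : Hu' - 1 ≠ 0 := by
      intro h
      rw [h] at c3
      simp at c3
      exact hν0 c3
    have hνr : ν = r := by
      have : (Hu - 1) * (ν - r) = 0 := by linear_combination c2 - c1
      rcases mul_eq_zero.mp this with h' | h'
      · exact absurd h' hHu1
      · linarith
    have hμr : μ = r := by
      have : (Hu' - 1) * (μ - r) = 0 := by linear_combination c4 - c3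
      rcases mul_eq_zero.mp this with h' | h'
      · exact absurd h' hHu1'
      · linarith
    exact hμν (by linarith)

end KahlerCVC

/-- In the Kähler cvc(1) package with `dim V ≥ 6`,
`λ(v) = R(v,Av,Av,v)/‖Av‖² = 4` for every unit vector `v`. -/
theorem stmt_18
    {V : Type*} [NormedAddCommGroup V] [InnerProductSpace ℝ V] [FiniteDimensional ℝ V]
    (hdim : 6 ≤ Module.finrank ℝ V)
    (J : V →ₗ[ℝ] V)
    (hJiso : ∀ x y : V, ⟪J x, J y⟫ = ⟪x, y⟫)
    (hJ2 : ∀ x : V, J (J x) = -x)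
    (R : V →ₗ[ℝ] V →ₗ[ℝ] V →ₗ[ℝ] V →ₗ[ℝ] ℝ)
    (hskew : ∀ X Y Z W : V, R X Y Z W = - R Y X Z W)
    (hpair : ∀ X Y Z W : V, R X Y Z W = R Z W X Y)
    (hbianchi : ∀ X Y Z W : V, R X Y Z W + R Y Z X W + R Z X Y W = 0)
    (hkahler : ∀ X Y Z W : V, R (J X) (J Y) Z W = R X Y Z W)
    (hsec : ∀ x y : V, ‖x‖ = 1 → ‖y‖ = 1 → ⟪x, y⟫ = 0 → 1 ≤ R y x x y)
    (A : V →ₗ[ℝ] V) (hAinv : Function.Bijective A)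
    (hAskew : ∀ x y : V, ⟪A x, y⟫ = -⟪x, A y⟫)
    (hE : ∀ v : V, ‖v‖ = 1 → ∀ w : V,
      (⟪w, v⟫ = 0 ∧ ∀ u : V, R w v v u = ⟪w, u⟫) ↔
        w ∈ (Submodule.span ℝ {v, A v})ᗮ) :
    ∀ v : V, ‖v‖ = 1 → R v (A v) (A v) v / ‖A v‖ ^ 2 = 4 := by
  have jskew := aux_jskew J hJiso hJ2
  have jnorm := aux_jnorm J hJiso
  have L1 := aux_L1 R A hE
  have L1g := aux_L1g R A L1
  have P1a := aux_P1a R A hAskew L1 L1g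
  have lam_ne := aux_lam_ne R A hskew hpair hAskew hAinv hE L1
  have T4a := tst_T4a J R A hJiso hJ2 hpair hkahler hE L1 jskew
  have T4b := tst_T4b J A hJiso hJ2 hAskew jskew T4a
  have CURV := aux_CURV J R A hJiso hJ2 hskew hpair hbianchi hkahler L1 P1a
  obtain ⟨c, hc⟩ := tst_T4c J A hdim hJ2 hAinv T4b
  rcases tst_T4d J A hdim hJ2 hAinv hAskew jskew hc with h1 | hm1
  · have hcom : ∀ x : V, A (J x) = J (A x) := by
      intro x; rw [hc x, h1, one_smul]
    exact tst_spectral J R A hdim hJiso hJ2 hpair hAinv hAskew jskew jnorm CURV hcom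
  · exact (tst_anti J R A hdim hJiso hJ2 hpair hkahler hAinv hAskew jskew jnorm
      L1 P1a lam_ne (fun x => by rw [hc x, hm1, neg_one_smul])).elim
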